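/- Let F(a,b) = (a(1 − a²/b), (α/(νn))(c_ν b − 1 − ((n+1)/α)ν a²)) with c_ν = 1 + ν(n+1)/α. The equilibria of F with a ≥ 0, b > 0 are exactly P = (0, 1/c_ν) and Q = (1, 1). At P the Jacobian of F has eigenvalues 1 and (α/(nν))c_ν, both positive with (α/(nν))c_ν > 1; at Q the Jacobian has one positive and one negative real eigenvalue, i.e., Q is a hyperbolic saddle. -/

import Mathlib

private lemma stmt17_key (α n ν c : ℝ) (p : ℝ × ℝ) (hp : p.2 ≠ 0) (v : ℝ × ℝ) :
    fderiv ℝ (fun p : ℝ × ℝ => (p.1 * (1 - p.1 ^ 2 / p.2),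
      (α / (ν * n)) * (c * p.2 - 1 - ((n + 1) / α) * ν * p.1 ^ 2))) p v
    = ((1 - 3 * p.1 ^ 2 / p.2) * v.1 + (p.1 ^ 3 / p.2 ^ 2) * v.2,
       (-(α / (ν * n)) * (2 * ((n + 1) / α) * ν * p.1)) * v.1
         + (α / (ν * n)) * c * v.2) := by
  have hinv : HasFDerivAt (fun q : ℝ × ℝ => (q.2)⁻¹) _ p :=
    (hasDerivAt_inv hp).hasFDerivAt.comp p hasFDerivAt_snd
  have h1 : HasFDerivAt (fun q : ℝ × ℝ => q.1 * (1 - q.1 * q.1 * (q.2)⁻¹)) _ p :=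
    (hasFDerivAt_fst).mul ((hasFDerivAt_const 1 p).sub
      ((hasFDerivAt_fst.mul hasFDerivAt_fst).mul hinv))
  have h2 : HasFDerivAt (fun q : ℝ × ℝ =>
      (α / (ν * n)) * (c * q.2 - 1 - ((n + 1) / α) * ν * (q.1 * q.1))) _ p :=
    ((((hasFDerivAt_snd (𝕜 := ℝ) (E := ℝ) (F := ℝ) (p := p)).const_mul c).sub_const 1).sub
      ((hasFDerivAt_fst.mul hasFDerivAt_fst).const_mul (((n + 1) / α) * ν))).const_mul (α / (ν * n))
  have hfun : (fun p : ℝ × ℝ => (p.1 * (1 - p.1 ^ 2 / p.2),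
      (α / (ν * n)) * (c * p.2 - 1 - ((n + 1) / α) * ν * p.1 ^ 2)))
      = fun q : ℝ × ℝ => (q.1 * (1 - q.1 * q.1 * (q.2)⁻¹),
      (α / (ν * n)) * (c * q.2 - 1 - ((n + 1) / α) * ν * (q.1 * q.1))) := by
    funext q; simp [pow_two, div_eq_mul_inv]
  rw [hfun, (h1.prodMk h2).fderiv]
  simp only [ContinuousLinearMap.prod_apply, ContinuousLinearMap.add_apply,
    ContinuousLinearMap.smul_apply, ContinuousLinearMap.sub_apply,
    ContinuousLinearMap.comp_apply, ContinuousLinearMap.smulRight_apply,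
    ContinuousLinearMap.one_apply, ContinuousLinearMap.coe_fst',
    ContinuousLinearMap.coe_snd', ContinuousLinearMap.zero_apply, smul_eq_mul,
    Prod.mk.injEq, ContinuousLinearMap.toSpanSingleton_apply, Pi.mul_apply]
  constructor <;> ring

set_option maxHeartbeats 1000000 in
/-- Equilibria and their hyperbolicity for the planar vector field F. -/
theorem stmt_17 (α n ν : ℝ) (hα : 0 < α) (hn : 0 < n) (hν : 0 < ν)
    (c : ℝ) (hc : c = 1 + ν * (n + 1) / α)
    (F : ℝ × ℝ → ℝ × ℝ)
    (hF : ∀ p : ℝ × ℝ, F p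
      = (p.1 * (1 - p.1 ^ 2 / p.2),
         (α / (ν * n)) * (c * p.2 - 1 - ((n + 1) / α) * ν * p.1 ^ 2))) :
    (∀ a b : ℝ, 0 ≤ a → 0 < b →
      (F (a, b) = 0 ↔ (a, b) = ((0 : ℝ), 1 / c) ∨ (a, b) = ((1 : ℝ), (1 : ℝ)))) ∧
    (fderiv ℝ F ((0 : ℝ), 1 / c) (1, 0) = (1 : ℝ) • ((1 : ℝ), (0 : ℝ)) ∧
     fderiv ℝ F ((0 : ℝ), 1 / c) (0, 1) = (α / (n * ν) * c) • ((0 : ℝ), (1 : ℝ)) ∧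
     1 < α / (n * ν) * c) ∧
    (∃ lm lp : ℝ, lm < 0 ∧ 0 < lp ∧
      ∃ vm vp : ℝ × ℝ, vm ≠ 0 ∧ vp ≠ 0 ∧
        fderiv ℝ F ((1 : ℝ), (1 : ℝ)) vm = lm • vm ∧
        fderiv ℝ F ((1 : ℝ), (1 : ℝ)) vp = lp • vp) := by
  have hα' : α ≠ 0 := ne_of_gt hα
  have hn' : n ≠ 0 := ne_of_gt hn
  have hν' : ν ≠ 0 := ne_of_gt hν
  have hνn : (0:ℝ) < ν * n := mul_pos hν hn
  have hc0 : 0 < c := by rw [hc]; positivity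
  have hFg : F = fun p : ℝ × ℝ => (p.1 * (1 - p.1 ^ 2 / p.2),
      (α / (ν * n)) * (c * p.2 - 1 - ((n + 1) / α) * ν * p.1 ^ 2)) := funext hF
  subst hFg
  have key := stmt17_key α n ν c
  refine ⟨?_, ?_, ?_⟩
  · -- equilibria
    intro a b ha hb
    simp only [Prod.mk_eq_zero, Prod.mk.injEq]
    constructor
    · rintro ⟨h1, h2⟩
      have h2' : c * b - 1 - (n + 1) / α * ν * a ^ 2 = 0 := by
        have hne : α / (ν * n) ≠ 0 := div_ne_zero hα' hνn.ne'
        exact (mul_eq_zero.mp h2).resolve_left hne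
      rcases mul_eq_zero.mp h1 with h | h
      · left
        refine ⟨h, ?_⟩
        subst h
        have : c * b = 1 := by nlinarith [h2']
        rw [eq_div_iff hc0.ne']
        linarith [mul_comm c b ▸ this]
      · right
        have hab : a ^ 2 = b := by
          field_simp at h
          linarith
        have hb1 : b = 1 := by
          rw [hc] at h2'
          have : (1 : ℝ) * b = 1 := by
            field_simp at h2' ⊢
            nlinarith [h2', hab]
          linarith
        have ha1 : a = 1 := by
          have h0 : (a - 1) * (a + 1) = 0 := by nlinarith [hab, hb1]
          rcases mul_eq_zero.mp h0 with h' | h'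
          · linarith
          · linarith
        exact ⟨ha1, hb1⟩
    · rintro (⟨h1, h2⟩ | ⟨h1, h2⟩) <;> subst h1 <;> subst h2 <;>
        constructor <;> field_simp <;> ring_nf <;> rw [hc] <;> field_simp <;> ring
  · -- node at P
    have hP : ((0:ℝ), 1 / c).2 ≠ 0 := by simpa using one_div_ne_zero hc0.ne'
    refine ⟨?_, ?_, ?_⟩
    · rw [key _ hP]
      norm_num
    · rw [key _ hP, Prod.ext_iff]
      simp only [Prod.smul_fst, Prod.smul_snd, smul_eq_mul]
      constructor
      · norm_num
      · ring
    · have h1 : 0 < α / (n * ν) := div_pos hα (mul_pos hn hν)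
      have h2 : (1:ℝ) < (n + 1) / n := by rw [lt_div_iff₀ hn]; linarith
      have hexp : α / (n * ν) * c = α / (n * ν) + (n + 1) / n := by
        rw [hc]; field_simp
      rw [hexp]; linarith
  · -- saddle at Q
    have hQ : ((1:ℝ), (1:ℝ)).2 ≠ 0 := one_ne_zero
    set A := α / (ν * n) with hA
    have hA0 : 0 < A := div_pos hα hνn
    set m := (n + 1) / n with hm
    have E1 : A * (2 * ((n + 1) / α) * ν * 1) = 2 * m := by
      rw [hA, hm]; field_simp
    have E2 : A * c = A + m := by
      rw [hA, hm, hc]; field_simp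
    set t := A + m - 2 with ht
    set s := Real.sqrt (t ^ 2 + 8 * A) with hs
    have hs0 : 0 ≤ s := Real.sqrt_nonneg _
    have hs2 : s ^ 2 = t ^ 2 + 8 * A := Real.sq_sqrt (by positivity)
    refine ⟨(t - s) / 2, (t + s) / 2, ?_, ?_,
      (1, (t - s) / 2 + 2), (1, (t + s) / 2 + 2),
      fun h => one_ne_zero (congrArg Prod.fst h),
      fun h => one_ne_zero (congrArg Prod.fst h), ?_, ?_⟩
    · nlinarith [hs2, hs0, hA0]
    · nlinarith [hs2, hs0, hA0]
    · rw [key _ hQ]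
      rw [Prod.ext_iff]
      simp only [Prod.smul_fst, Prod.smul_snd, smul_eq_mul]
      refine ⟨by ring, ?_⟩
      linear_combination (-1 : ℝ) * E1 + ((t - s) / 2 + 2) * E2 - (1/4 : ℝ) * hs2
    · rw [key _ hQ]
      rw [Prod.ext_iff]
      simp only [Prod.smul_fst, Prod.smul_snd, smul_eq_mul]
      refine ⟨by ring, ?_⟩
      linear_combination (-1 : ℝ) * E1 + ((t + s) / 2 + 2) * E2 - (1/4 : ℝ) * hs2
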